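/- Let a₁, a₂, b₁, b₂ be integers with 2 ≤ a₁ < a₂ and 1 ≤ b₁ < b₂. In the Artin braid group B_{a₂}, the Couture–Perron braid B[a₁,a₂;b₁,b₂] is conjugate to W(a₂)^{b₁} · W(a₁)^{b₂-b₁}; more precisely, with Ω(a₁,a₂) := H(a₁,a₂)⁻¹ · G(a₁-2), one has Ω(a₁,a₂)⁻¹ · B[a₁,a₂;b₁,b₂] · Ω(a₁,a₂) = W(a₁) · W(a₂)^{b₁} · W(a₁)^{b₂-b₁-1}. -/

import Mathlib

/-- The braid relations for the Artin braid group `B_n`, as a set of elements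
of the free group on generators `σ_1, …, σ_{n-1}` (indexed by `Fin (n-1)`,
where the index `i : Fin (n-1)` corresponds to the generator `σ_{i+1}`). -/
def braidRels (n : ℕ) : Set (FreeGroup (Fin (n - 1))) :=
  {r | ∃ i j : Fin (n - 1), (j : ℕ) = (i : ℕ) + 1 ∧
      r = FreeGroup.of i * FreeGroup.of j * FreeGroup.of i *
          (FreeGroup.of j * FreeGroup.of i * FreeGroup.of j)⁻¹} ∪
  {r | ∃ i j : Fin (n - 1), (i : ℕ) + 2 ≤ (j : ℕ) ∧
      r = FreeGroup.of i * FreeGroup.of j * (FreeGroup.of j * FreeGroup.of i)⁻¹}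

/-- The Artin braid group `B_n`. -/
abbrev BraidGroup (n : ℕ) := PresentedGroup (braidRels n)

/-- The generator `σ_i` of `B_n`, for `1 ≤ i ≤ n - 1` (junk value `1` otherwise). -/
def σ (n i : ℕ) : BraidGroup n :=
  if h : 1 ≤ i ∧ i ≤ n - 1 then PresentedGroup.of (⟨i - 1, by omega⟩ : Fin (n - 1)) else 1

/-- `W n m` is the element `W(m) = σ_{m-1} σ_{m-2} ⋯ σ_1` of `B_n`, with `W(1) = 1`. -/
def W (n : ℕ) : ℕ → BraidGroup n
  | 0 => 1
  | m + 1 => σ n m * W n m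

/-- `eB m k` is the product `e(k)` of the generators `σ_i` of `B_m` over even `i`
with `2 ≤ i < k` (the factors commute, so the order is irrelevant; note `σ m 0 = 1`). -/
def eB (m k : ℕ) : BraidGroup m :=
  (((List.range k).filter (fun i => i % 2 = 0)).map (σ m)).prod

/-- `oB m k` is the product `o(k)` of the generators `σ_i` of `B_m` over odd `i`
with `1 ≤ i < k` (the factors commute, so the order is irrelevant). -/
def oB (m k : ℕ) : BraidGroup m :=
  (((List.range k).filter (fun i => i % 2 = 1)).map (σ m)).prod

/-- The elements `G(k)` of `B_m`: `G(0) = G(1) = 1`, and for `k ≥ 2`,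
`G(k) = e(k+1) o(k) G(k-2)` if `k` is odd, `G(k) = o(k+1) e(k) G(k-2)` if `k` is even. -/
def G (m : ℕ) : ℕ → BraidGroup m
  | 0 => 1
  | 1 => 1
  | k + 2 => if (k + 2) % 2 = 1 then eB m (k + 3) * oB m (k + 2) * G m k
             else oB m (k + 3) * eB m (k + 2) * G m k

/-- The Couture–Perron braid `B[a₁,a₂;b₁,b₂]` in `B_m`:
`(e(a₂)o(a₂))^{b₁} (e(a₁)o(a₁))^{b₂-b₁}` if `a₁` is odd, and
`(o(a₂)e(a₂))^{b₁} (o(a₁)e(a₁))^{b₂-b₁}` if `a₁` is even. -/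
def CP (m a₁ a₂ b₁ b₂ : ℕ) : BraidGroup m :=
  if a₁ % 2 = 1 then (eB m a₂ * oB m a₂) ^ b₁ * (eB m a₁ * oB m a₁) ^ (b₂ - b₁)
  else (oB m a₂ * eB m a₂) ^ b₁ * (oB m a₁ * eB m a₁) ^ (b₂ - b₁)

namespace CPaux

lemma sigma_eq_one {n i : ℕ} (h : ¬ (1 ≤ i ∧ i ≤ n - 1)) : σ n i = 1 := dif_neg h

lemma rel_one {n : ℕ} {r : FreeGroup (Fin (n-1))} (h : r ∈ braidRels n) :
    PresentedGroup.mk (braidRels n) r = 1 := by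
  apply (QuotientGroup.eq_one_iff _).mpr
  exact Subgroup.subset_normalClosure h

lemma sigma_comm {n : ℕ} (i j : ℕ) (h : i + 2 ≤ j) : Commute (σ n i) (σ n j) := by
  by_cases hi : 1 ≤ i ∧ i ≤ n - 1
  · by_cases hj : 1 ≤ j ∧ j ≤ n - 1
    · have hij : i - 1 < n - 1 := by omega
      have hjj : j - 1 < n - 1 := by omega
      have hrel : (FreeGroup.of (⟨i-1, hij⟩ : Fin (n-1)) * FreeGroup.of (⟨j-1, hjj⟩ : Fin (n-1)) *
          (FreeGroup.of (⟨j-1, hjj⟩ : Fin (n-1)) * FreeGroup.of (⟨i-1, hij⟩ : Fin (n-1)))⁻¹)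
          ∈ braidRels n := by
        refine Or.inr ⟨⟨i-1, hij⟩, ⟨j-1, hjj⟩, by simp; omega, rfl⟩
      have h1 := rel_one hrel
      simp only [map_mul, map_inv] at h1
      have h2 : PresentedGroup.mk (braidRels n) (FreeGroup.of ⟨i-1, hij⟩) *
          PresentedGroup.mk (braidRels n) (FreeGroup.of ⟨j-1, hjj⟩) =
          PresentedGroup.mk (braidRels n) (FreeGroup.of ⟨j-1, hjj⟩) *
          PresentedGroup.mk (braidRels n) (FreeGroup.of ⟨i-1, hij⟩) := by
        rw [mul_inv_eq_one] at h1
        exact h1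
      unfold σ
      rw [dif_pos hi, dif_pos hj]
      exact h2
    · rw [sigma_eq_one hj]; exact Commute.one_right _
  · rw [sigma_eq_one hi]; exact Commute.one_left _

/-- product of generators over a list of indices -/
def P (n : ℕ) (l : List ℕ) : BraidGroup n := (l.map (σ n)).prod

@[simp] lemma P_nil {n : ℕ} : P n [] = 1 := rfl
@[simp] lemma P_cons {n i : ℕ} {l : List ℕ} : P n (i :: l) = σ n i * P n l := by
  simp [P]
@[simp] lemma P_append {n : ℕ} {l₁ l₂ : List ℕ} : P n (l₁ ++ l₂) = P n l₁ * P n l₂ := by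
  simp [P]
@[simp] lemma P_singleton {n i : ℕ} : P n [i] = σ n i := by simp [P]

lemma P_comm {n : ℕ} {l₁ l₂ : List ℕ}
    (h : ∀ i ∈ l₁, ∀ j ∈ l₂, i + 2 ≤ j ∨ j + 2 ≤ i) : Commute (P n l₁) (P n l₂) := by
  apply Commute.list_prod_right
  intro x hx
  obtain ⟨j, hj, rfl⟩ := List.mem_map.1 hx
  apply Commute.list_prod_left
  intro y hy
  obtain ⟨i, hi, rfl⟩ := List.mem_map.1 hy
  rcases h i hi j hj with h' | h'
  · exact sigma_comm i j h'
  · exact (sigma_comm j i h').symm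

lemma sigma_P_comm {n i : ℕ} {l : List ℕ}
    (h : ∀ j ∈ l, i + 2 ≤ j ∨ j + 2 ≤ i) : Commute (σ n i) (P n l) := by
  have := P_comm (n := n) (l₁ := [i]) (l₂ := l) (by simpa using h)
  simpa using this

def elist (k : ℕ) : List ℕ := (List.range k).filter (fun i => i % 2 = 0)
def olist (k : ℕ) : List ℕ := (List.range k).filter (fun i => i % 2 = 1)

lemma eB_eq {n k : ℕ} : eB n k = P n (elist k) := rfl
lemma oB_eq {n k : ℕ} : oB n k = P n (olist k) := rfl

lemma elist_succ (k : ℕ) : elist (k+1) = elist k ++ if k % 2 = 0 then [k] else [] := by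
  by_cases h : k % 2 = 0 <;> simp [elist, List.range_succ, List.filter_append, h]

lemma olist_succ (k : ℕ) : olist (k+1) = olist k ++ if k % 2 = 1 then [k] else [] := by
  by_cases h : k % 2 = 1 <;> simp [olist, List.range_succ, List.filter_append, h]

lemma mem_elist {i k : ℕ} (h : i ∈ elist k) : i < k := by
  simp [elist, List.mem_filter] at h; exact h.1

lemma mem_olist {i k : ℕ} (h : i ∈ olist k) : i < k := by
  simp [olist, List.mem_filter] at h; exact h.1

def Zlist (p : Bool) (k : ℕ) : List ℕ := if p then elist k ++ olist k else olist k ++ elist k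

def Zf (p : Bool) (n k : ℕ) : BraidGroup n := P n (Zlist p k)

lemma mem_Zlist {p : Bool} {i k : ℕ} (h : i ∈ Zlist p k) : i < k := by
  cases p <;> simp [Zlist] at h <;> rcases h with h | h <;>
    first | exact mem_olist h | exact mem_elist h

lemma Zf_succ {n k : ℕ} {p : Bool} (hp : decide (k % 2 = 1) = p) :
    Zf p n (k+1) = Zf p n k * σ n k := by
  cases p
  · have hk : k % 2 = 0 := by
      have := of_decide_eq_false hp; omega
    simp [Zf, Zlist, olist_succ, elist_succ, hk, mul_assoc]
  · have hk : k % 2 = 1 := of_decide_eq_true hp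
    simp [Zf, Zlist, olist_succ, elist_succ, hk, mul_assoc]

lemma Zf_succ2 {n k : ℕ} {p : Bool} (hp : decide (k % 2 = 1) = p) :
    Zf p n (k+2) = Zf p n k * σ n (k+1) * σ n k := by
  cases p
  · have hk : k % 2 = 0 := by have := of_decide_eq_false hp; omega
    have h1 : (k+1) % 2 = 1 := by omega
    have hc : Commute (σ n (k+1)) (P n (elist k)) := by
      apply sigma_P_comm
      intro j hj
      have := mem_elist hj; omega
    simp only [Zf, Zlist, if_neg (Bool.false_ne_true), olist_succ, elist_succ, hk, h1,
      if_pos, if_neg, P_append, P_singleton]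
    simp [hk, h1]
    have h2 : σ n (k+1) * (P n (elist k) * σ n k) = P n (elist k) * (σ n (k+1) * σ n k) := by
      rw [← mul_assoc, hc.eq, mul_assoc]
    rw [mul_assoc, h2, ← mul_assoc, ← mul_assoc]
  · have hk : k % 2 = 1 := of_decide_eq_true hp
    have h1 : (k+1) % 2 = 0 := by omega
    have hc : Commute (σ n (k+1)) (P n (olist k)) := by
      apply sigma_P_comm
      intro j hj
      have := mem_olist hj; omega
    simp only [Zf, Zlist, if_pos, olist_succ, elist_succ, hk, h1, P_append, P_singleton]
    simp [hk, h1]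
    have h2 : σ n (k+1) * (P n (olist k) * σ n k) = P n (olist k) * (σ n (k+1) * σ n k) := by
      rw [← mul_assoc, hc.eq, mul_assoc]
    rw [mul_assoc, h2, ← mul_assoc, ← mul_assoc]

def Glist : ℕ → List ℕ
  | 0 => []
  | 1 => []
  | k + 2 => Zlist (decide ((k + 2) % 2 = 1)) (k + 2) ++ Glist k

lemma mem_Glist : ∀ k, ∀ i ∈ Glist k, i < k := by
  intro k
  induction k using Nat.twoStepInduction with
  | zero => simp [Glist]
  | one => simp [Glist]
  | more k ih _ =>
    intro i hi
    rw [Glist] at hi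
    rcases List.mem_append.1 hi with h | h
    · exact mem_Zlist h
    · have := ih i h; omega

lemma G_eq {n : ℕ} : ∀ k, G n k = P n (Glist k) := by
  intro k
  induction k using Nat.twoStepInduction with
  | zero => simp [G, Glist]
  | one => simp [G, Glist]
  | more k ih _ =>
    have hGu : G n (k+2) = if (k + 2) % 2 = 1 then eB n (k + 3) * oB n (k + 2) * G n k
             else oB n (k + 3) * eB n (k + 2) * G n k := rfl
    rw [Glist, P_append, ← ih, hGu]
    by_cases hp : (k + 2) % 2 = 1
    · have hne : ¬ ((k+2) % 2 = 0) := by omega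
      have he : eB n (k+3) = eB n (k+2) := by
        rw [eB_eq, eB_eq, show k+3 = (k+2)+1 from rfl, elist_succ, if_neg hne,
          List.append_nil]
      rw [if_pos hp, he, Zlist, if_pos (by simp only [decide_eq_true_eq]; exact hp), P_append, ← eB_eq, ← oB_eq]
    · have ho : oB n (k+3) = oB n (k+2) := by
        rw [oB_eq, oB_eq, show k+3 = (k+2)+1 from rfl, olist_succ, if_neg hp,
          List.append_nil]
      rw [if_neg hp, ho, Zlist, if_neg (by simp only [decide_eq_true_eq]; exact hp), P_append, ← eB_eq, ← oB_eq]

lemma Gdef {n k : ℕ} : G n (k+2) = Zf (decide ((k + 2) % 2 = 1)) n (k+2) * G n k := by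
  rw [G_eq (k+2), G_eq k, Glist, P_append]; rfl

lemma sigma_G_comm {n j k : ℕ} (h : k + 1 ≤ j) : Commute (σ n j) (G n k) := by
  rw [G_eq]
  apply sigma_P_comm
  intro i hi
  have := mem_Glist k i hi; omega

lemma LemA {n : ℕ} : ∀ k, Zf (decide ((k + 2) % 2 = 1)) n (k+2) * G n k = G n k * W n (k+2) := by
  intro k
  induction k using Nat.twoStepInduction with
  | zero =>
    have h0 : σ n 0 = 1 := sigma_eq_one (by omega)
    have h2 : Zf (decide ((0 + 2) % 2 = 1)) n 2 = σ n 1 := by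
      simp [Zf, Zlist, elist, olist, List.range_succ, h0]
    have hW : W n 2 = σ n 1 * (σ n 0 * W n 0) := rfl
    rw [h2, hW, h0, show G n 0 = 1 from rfl, show W n 0 = (1 : BraidGroup n) from rfl]
    group
  | one =>
    have h0 : σ n 0 = 1 := sigma_eq_one (by omega)
    have h2 : Zf (decide ((1 + 2) % 2 = 1)) n 3 = σ n 2 * σ n 1 := by
      simp [Zf, Zlist, elist, olist, List.range_succ, h0]
    have hW : W n 3 = σ n 2 * (σ n 1 * (σ n 0 * W n 0)) := rfl
    rw [h2, hW, h0, show G n 1 = 1 from rfl, show W n 0 = (1 : BraidGroup n) from rfl]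
    group
  | more k ih _ =>
    have hpar : decide ((k+2+2) % 2 = 1) = decide ((k + 2) % 2 = 1) := by
      congr 1
      simp [Nat.add_mod_right]
    rw [hpar]
    generalize hp : decide ((k + 2) % 2 = 1) = p at ih ⊢
    have hZ : Zf p n (k+2+2) = Zf p n (k+2) * σ n (k+2+1) * σ n (k+2) := Zf_succ2 hp
    have hW : W n (k+2+2) = σ n (k+2+1) * (σ n (k+2) * W n (k+2)) := rfl
    have hGd : G n (k+2) = Zf p n (k+2) * G n k := by rw [Gdef, hp]
    have c3 : Commute (σ n (k+2+1)) (G n k) := sigma_G_comm (by omega)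
    have c2 : Commute (σ n (k+2)) (G n k) := sigma_G_comm (by omega)
    calc Zf p n (k+2+2) * G n (k+2)
        = Zf p n (k+2) * (σ n (k+2+1) * (σ n (k+2) * (Zf p n (k+2) * G n k))) := by
          rw [hZ, hGd]; simp only [mul_assoc]
      _ = Zf p n (k+2) * (σ n (k+2+1) * (σ n (k+2) * (G n k * W n (k+2)))) := by
          rw [ih]
      _ = Zf p n (k+2) * (σ n (k+2+1) * (G n k * (σ n (k+2) * W n (k+2)))) := by
          rw [← mul_assoc (σ n (k+2)), c2.eq, mul_assoc]
      _ = Zf p n (k+2) * (G n k * (σ n (k+2+1) * (σ n (k+2) * W n (k+2)))) := by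
          rw [← mul_assoc (σ n (k+2+1)), c3.eq, mul_assoc]
      _ = G n (k+2) * W n (k+2+2) := by
          rw [hGd, hW]; simp only [mul_assoc]

lemma W_eq {n : ℕ} : ∀ k, W n k = P n ((List.range k).reverse) := by
  intro k
  induction k with
  | zero => simp [W]
  | succ k ih =>
    rw [W, List.range_succ, List.reverse_append, ih]
    simp

lemma Wsplit {n : ℕ} : ∀ t a, W n (a + t) =
    P n ((List.range t).map (fun i => a + t - 1 - i)) * W n a := by
  intro t
  induction t with
  | zero => simp
  | succ t ih =>
    intro a
    have h1 : W n (a + (t+1)) = σ n (a + t) * W n (a + t) := rfl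
    have h2 : (List.range (t+1)).map (fun i => a + (t+1) - 1 - i)
        = (a + t) :: (List.range t).map (fun i => a + t - 1 - i) := by
      rw [List.range_succ_eq_map]
      simp only [List.map_cons, List.map_map]
      refine List.cons_eq_cons.mpr ⟨by omega, ?_⟩
      apply List.map_congr_left
      intro i _
      simp only [Function.comp_apply]
      omega
    rw [h1, h2, P_cons, ih a, mul_assoc]

/-- the reversed/flipped zigzag word -/
def revU (s j : ℕ) : BraidGroup s :=
  P s ((Zlist (decide (j % 2 = 1)) j).reverse.map (fun i => s - i))

lemma revU_two {s j : ℕ} (hj : j + 1 ≤ s) :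
    revU s (j+2) = σ s (s - j) * σ s (s - j - 1) * revU s j := by
  have hpar : decide ((j+2) % 2 = 1) = decide (j % 2 = 1) := by
    congr 1; simp [Nat.add_mod_right]
  have hsj : s - (j+1) = s - j - 1 := by omega
  rcases Nat.even_or_odd j with hev | hod
  · have hj0 : j % 2 = 0 := Nat.even_iff.mp hev
    have hj1 : ¬ (j % 2 = 1) := by omega
    have hd : decide (j % 2 = 1) = false := by simp [hj1]
    have e2 : elist (j+2) = elist j ++ [j] := by
      rw [show j+2 = (j+1)+1 from rfl, elist_succ, elist_succ, if_pos hj0,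
        if_neg (by omega : ¬ ((j+1) % 2 = 0)), List.append_nil]
    have o2 : olist (j+2) = olist j ++ [j+1] := by
      rw [show j+2 = (j+1)+1 from rfl, olist_succ, olist_succ, if_neg hj1,
        if_pos (by omega : (j+1) % 2 = 1), List.append_nil]
    have hl1 : (Zlist false (j+2)).reverse.map (fun i => s - i) =
        ((s-j) :: (elist j).reverse.map (fun i => s - i)) ++
        ((s-j-1) :: (olist j).reverse.map (fun i => s - i)) := by
      rw [Zlist, if_neg (by simp), e2, o2]
      simp [hsj]
    have hl2 : (Zlist false j).reverse.map (fun i => s - i) =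
        (elist j).reverse.map (fun i => s - i) ++ (olist j).reverse.map (fun i => s - i) := by
      rw [Zlist, if_neg (by simp)]
      simp
    have hc : Commute (P s ((elist j).reverse.map (fun i => s - i))) (σ s (s - j - 1)) := by
      apply Commute.symm
      apply sigma_P_comm
      intro x hx
      simp only [List.map_reverse, List.mem_reverse, List.mem_map] at hx
      obtain ⟨i, hi, rfl⟩ := hx
      have := mem_elist hi
      left; omega
    simp only [revU, hpar, hd, hl1, hl2, P_append, P_cons]
    rw [mul_assoc, ← mul_assoc (P s ((elist j).reverse.map (fun i => s - i))), hc.eq,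
      mul_assoc, ← mul_assoc]
  · have hj1 : j % 2 = 1 := Nat.odd_iff.mp hod
    have hd : decide (j % 2 = 1) = true := by simp [hj1]
    have e2 : elist (j+2) = elist j ++ [j+1] := by
      rw [show j+2 = (j+1)+1 from rfl, elist_succ, elist_succ,
        if_neg (by omega : ¬ (j % 2 = 0)),
        if_pos (by omega : (j+1) % 2 = 0), List.append_nil]
    have o2 : olist (j+2) = olist j ++ [j] := by
      rw [show j+2 = (j+1)+1 from rfl, olist_succ, olist_succ, if_pos hj1,
        if_neg (by omega : ¬ ((j+1) % 2 = 1)), List.append_nil]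
    have hl1 : (Zlist true (j+2)).reverse.map (fun i => s - i) =
        ((s-j) :: (olist j).reverse.map (fun i => s - i)) ++
        ((s-j-1) :: (elist j).reverse.map (fun i => s - i)) := by
      rw [Zlist, if_pos (by simp), e2, o2]
      simp [hsj]
    have hl2 : (Zlist true j).reverse.map (fun i => s - i) =
        (olist j).reverse.map (fun i => s - i) ++ (elist j).reverse.map (fun i => s - i) := by
      rw [Zlist, if_pos (by simp)]
      simp
    have hc : Commute (P s ((olist j).reverse.map (fun i => s - i))) (σ s (s - j - 1)) := by
      apply Commute.symm
      apply sigma_P_comm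
      intro x hx
      simp only [List.map_reverse, List.mem_reverse, List.mem_map] at hx
      obtain ⟨i, hi, rfl⟩ := hx
      have := mem_olist hi
      left; omega
    simp only [revU, hpar, hd, hl1, hl2, P_append, P_cons]
    rw [mul_assoc, ← mul_assoc (P s ((olist j).reverse.map (fun i => s - i))), hc.eq,
      mul_assoc, ← mul_assoc]

lemma sigma_top {s : ℕ} : σ s s = 1 := sigma_eq_one (by omega)

lemma revU_one {s : ℕ} : revU s 1 = 1 := by
  have : Zlist (decide (1 % 2 = 1)) 1 = [0] := by
    rw [show decide (1 % 2 = 1) = true by simp, Zlist, if_pos rfl]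
    rfl
  rw [revU, this]
  simp [sigma_top]

lemma revU_two' {s : ℕ} : revU s 2 = σ s (s - 1) := by
  have : Zlist (decide (2 % 2 = 1)) 2 = [1, 0] := by
    rw [show decide (2 % 2 = 1) = false by simp, Zlist, if_neg (by simp)]
    rfl
  rw [revU, this]
  simp [sigma_top]

lemma spl {s : ℕ} : ∀ t a, a + t = s →
    Zf (decide (a % 2 = 1)) s s = Zf (decide (a % 2 = 1)) s a * revU s (t+1) := by
  intro t
  induction t using Nat.twoStepInduction with
  | zero =>
    intro a ha
    subst ha
    rw [revU_one, mul_one]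
    simp
  | one =>
    intro a ha
    subst ha
    rw [revU_two']
    simp only [Nat.add_sub_cancel]
    exact Zf_succ rfl
  | more t ih _ =>
    intro a ha
    have ih' := ih (a + 2) (by omega)
    have hpar : decide ((a+2) % 2 = 1) = decide (a % 2 = 1) := by
      congr 1; simp [Nat.add_mod_right]
    rw [hpar] at ih'
    have hrec : revU s (t+1+2) = σ s (s - (t+1)) * σ s (s - (t+1) - 1) * revU s (t+1) :=
      revU_two (by omega)
    have h1 : s - (t+1) = a + 1 := by omega
    have h2 : s - (t+1) - 1 = a := by omega
    rw [h2] at hrec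
    rw [h1] at hrec
    have hZ : Zf (decide (a % 2 = 1)) s (a+2) =
        Zf (decide (a % 2 = 1)) s a * σ s (a+1) * σ s a := Zf_succ2 rfl
    rw [show t+2+1 = t+1+2 from rfl, hrec, ih', hZ]
    simp only [mul_assoc]

section rho

variable {s : ℕ} (ρ : BraidGroup s → BraidGroup s)
  (hmul : ∀ x y, ρ (x * y) = ρ y * ρ x) (hone : ρ 1 = 1)
  (hσ : ∀ i, 1 ≤ i → i ≤ s - 1 → ρ (σ s i) = σ s (s - i))

include hone hσ in
lemma rho_sigma (i : ℕ) (h : i ≤ s - 1) : ρ (σ s i) = σ s (s - i) := by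
  rcases Nat.eq_zero_or_pos i with rfl | hi
  · rw [sigma_eq_one (by omega), hone, Nat.sub_zero, sigma_top]
  · exact hσ i hi h

include hmul hone hσ in
lemma rho_P (l : List ℕ) (hl : ∀ i ∈ l, i ≤ s - 1) :
    ρ (P s l) = P s (l.reverse.map (fun i => s - i)) := by
  induction l with
  | nil => simpa [P] using hone
  | cons i l ih =>
    rw [P_cons, hmul, ih (fun j hj => hl j (List.mem_cons_of_mem _ hj)),
      rho_sigma ρ hone hσ i (hl i (List.mem_cons_self))]
    simp

end rho

lemma Zf_true {n k : ℕ} : Zf true n k = eB n k * oB n k := by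
  rw [Zf, Zlist, if_pos rfl, P_append, eB_eq, oB_eq]

lemma Zf_false {n k : ℕ} : Zf false n k = oB n k * eB n k := by
  rw [Zf, Zlist, if_neg (by simp), P_append, eB_eq, oB_eq]

lemma Zf_eq' {p : Bool} {n k : ℕ} : Zf p n k = P n (Zlist p k) := rfl

end CPaux

open CPaux

/-- For `2 ≤ a₁ < a₂` and `1 ≤ b₁ < b₂`, the Couture–Perron braid `B[a₁,a₂;b₁,b₂]`
is conjugate in `B_{a₂}` to `W(a₂)^{b₁} W(a₁)^{b₂-b₁}`; more precisely, with
`Ω(a₁,a₂) := H(a₁,a₂)⁻¹ G(a₁-2)` (where `H(a₁,a₂) := ρ(G(a₂-a₁-1))`), one has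
`Ω⁻¹ B[a₁,a₂;b₁,b₂] Ω = W(a₁) W(a₂)^{b₁} W(a₁)^{b₂-b₁-1}`. -/
theorem CP_conj (a₁ a₂ b₁ b₂ : ℕ) (h1 : 2 ≤ a₁) (h12 : a₁ < a₂)
    (hb1 : 1 ≤ b₁) (hb : b₁ < b₂)
    (ρ : BraidGroup a₂ → BraidGroup a₂)
    (hmul : ∀ x y, ρ (x * y) = ρ y * ρ x) (hone : ρ 1 = 1)
    (hσ : ∀ i, 1 ≤ i → i ≤ a₂ - 1 → ρ (σ a₂ i) = σ a₂ (a₂ - i)) :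
    IsConj (W a₂ a₂ ^ b₁ * W a₂ a₁ ^ (b₂ - b₁)) (CP a₂ a₁ a₂ b₁ b₂) ∧
    ((ρ (G a₂ (a₂ - a₁ - 1)))⁻¹ * G a₂ (a₁ - 2))⁻¹ * CP a₂ a₁ a₂ b₁ b₂ *
        ((ρ (G a₂ (a₂ - a₁ - 1)))⁻¹ * G a₂ (a₁ - 2)) =
      W a₂ a₁ * W a₂ a₂ ^ b₁ * W a₂ a₁ ^ (b₂ - b₁ - 1) := by
  obtain ⟨d', hd2⟩ : ∃ e, a₂ = a₁ + (e + 1) := ⟨a₂ - a₁ - 1, by omega⟩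
  obtain ⟨n', hn⟩ : ∃ m, b₂ = b₁ + (m + 1) := ⟨b₂ - b₁ - 1, by omega⟩
  have hd1 : a₂ - a₁ - 1 = d' := by omega
  have hk12 : a₁ - 2 = a₁ - 2 := rfl
  have hbb : b₂ - b₁ = n' + 1 := by omega
  have hbb1 : b₂ - b₁ - 1 = n' := by omega
  obtain ⟨k₁, hk1⟩ : ∃ k, a₁ = k + 2 := ⟨a₁ - 2, by omega⟩
  have hk2 : a₁ - 2 = k₁ := by omega
  -- abbreviations
  set Hh := ρ (G a₂ d') with hHh
  set Gg := G a₂ k₁ with hGg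
  set Z2 := Zf (decide (a₁ % 2 = 1)) a₂ a₂ with hZ2
  set Z1 := Zf (decide (a₁ % 2 = 1)) a₂ a₁ with hZ1
  set Vp := P a₂ ((List.range (d' + 2)).map (fun i => a₂ - i)) with hVp
  set W1 := W a₂ a₁ with hW1
  set W2 := W a₂ a₂ with hW2
  -- CP in Zf form
  have hCP : CP a₂ a₁ a₂ b₁ b₂ = Z2 ^ b₁ * Z1 ^ (n' + 1) := by
    rw [hZ2, hZ1, ← hbb]
    by_cases h : a₁ % 2 = 1
    · have hdec : decide (a₁ % 2 = 1) = true := by simp [h]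
      unfold CP
      rw [if_pos h, hdec, Zf_true, Zf_true]
    · have hdec : decide (a₁ % 2 = 1) = false := by simp [h]
      unfold CP
      rw [if_neg h, hdec, Zf_false, Zf_false]
  -- Lemma A at a₁
  have hA1 : Z1 * Gg = Gg * W1 := by
    rw [hZ1, hGg, hW1, hk1]
    have := LemA (n := a₂) k₁
    have hpar : decide ((k₁ + 2) % 2 = 1) = decide ((k₁ + 2) % 2 = 1) := rfl
    exact this
  -- Lemma A at d'+2 and its ρ-image
  have hA2 := LemA (n := a₂) d'
  have hbound1 : ∀ i ∈ Zlist (decide ((d' + 2) % 2 = 1)) (d' + 2), i ≤ a₂ - 1 := by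
    intro i hi
    have := mem_Zlist hi
    omega
  have hbound2 : ∀ i ∈ Glist d', i ≤ a₂ - 1 := by
    intro i hi
    have := mem_Glist d' i hi
    omega
  have hbound3 : ∀ i ∈ (List.range (d' + 2)).reverse, i ≤ a₂ - 1 := by
    intro i hi
    simp only [List.mem_reverse, List.mem_range] at hi
    omega
  have hρZ : ρ (Zf (decide ((d' + 2) % 2 = 1)) a₂ (d' + 2)) = revU a₂ (d' + 2) := by
    rw [Zf_eq', rho_P ρ hmul hone hσ _ hbound1, revU]
  have hρW : ρ (W a₂ (d' + 2)) = Vp := by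
    rw [W_eq, rho_P ρ hmul hone hσ _ hbound3, List.reverse_reverse, hVp]
  have hρG : Hh = P a₂ ((Glist d').reverse.map (fun i => a₂ - i)) := by
    rw [hHh, G_eq, rho_P ρ hmul hone hσ _ hbound2]
  have hkey : Hh * revU a₂ (d' + 2) = Vp * Hh := by
    have h' := congrArg ρ hA2
    rw [hmul, hmul, hρZ, hρW] at h'
    exact h'
  -- H commutes with Z1
  have hHZ1 : Hh * Z1 = Z1 * Hh := by
    rw [hρG, hZ1, Zf_eq']
    refine (P_comm ?_).eq
    intro i hi j hj
    simp only [List.map_reverse, List.mem_reverse, List.mem_map] at hi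
    obtain ⟨x, hx, rfl⟩ := hi
    have hx' := mem_Glist d' x hx
    have hj' := mem_Zlist hj
    right
    omega
  -- Gg commutes with Vp
  have hGV : Gg * Vp = Vp * Gg := by
    rw [hGg, G_eq, hVp]
    refine (P_comm ?_).eq
    intro i hi j hj
    have hi' := mem_Glist k₁ i hi
    simp only [List.mem_map, List.mem_range] at hj
    obtain ⟨x, hx, rfl⟩ := hj
    left
    omega
  -- splitting
  have hSPL : Z2 = Z1 * revU a₂ (d' + 2) := by
    have := spl (s := a₂) (d' + 1) a₁ (by omega)
    rw [show d' + 1 + 1 = d' + 2 from rfl] at this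
    rw [hZ2, hZ1]
    exact this
  -- V * W1 = W2
  have hVsplit : Vp * W1 = W2 := by
    have hws := Wsplit (n := a₂) (d' + 1) a₁
    have hvv : Vp = P a₂ ((List.range (d' + 1)).map (fun i => a₁ + (d' + 1) - 1 - i)) := by
      rw [hVp, List.range_succ_eq_map]
      simp only [List.map_cons, List.map_map, Nat.sub_zero]
      rw [P_cons, sigma_top, one_mul]
      congr 1
      apply List.map_congr_left
      intro i _
      simp only [Function.comp_apply]
      omega
    rw [hvv, hW1, hW2, ← hws, hd2]
  -- dagger
  have hdagc : Hh * Z2 = Z1 * (Vp * Hh) := by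
    calc Hh * Z2 = Hh * (Z1 * revU a₂ (d' + 2)) := by rw [← hSPL]
      _ = (Hh * Z1) * revU a₂ (d' + 2) := by group
      _ = (Z1 * Hh) * revU a₂ (d' + 2) := by rw [hHZ1]
      _ = Z1 * (Hh * revU a₂ (d' + 2)) := by group
      _ = Z1 * (Vp * Hh) := by rw [hkey]
  -- main conjugation
  have hcZ2 : (Gg⁻¹ * Hh) * Z2 * (Hh⁻¹ * Gg) = W1 * Vp := by
    calc (Gg⁻¹ * Hh) * Z2 * (Hh⁻¹ * Gg)
        = Gg⁻¹ * ((Hh * Z2) * (Hh⁻¹ * Gg)) := by group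
      _ = Gg⁻¹ * ((Z1 * (Vp * Hh)) * (Hh⁻¹ * Gg)) := by rw [hdagc]
      _ = Gg⁻¹ * (Z1 * (Vp * Gg)) := by group
      _ = Gg⁻¹ * (Z1 * (Gg * Vp)) := by rw [hGV]
      _ = Gg⁻¹ * ((Z1 * Gg) * Vp) := by group
      _ = Gg⁻¹ * ((Gg * W1) * Vp) := by rw [hA1]
      _ = W1 * Vp := by group
  have hcZ1 : (Gg⁻¹ * Hh) * Z1 * (Hh⁻¹ * Gg) = W1 := by
    calc (Gg⁻¹ * Hh) * Z1 * (Hh⁻¹ * Gg)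
        = Gg⁻¹ * ((Hh * Z1) * (Hh⁻¹ * Gg)) := by group
      _ = Gg⁻¹ * ((Z1 * Hh) * (Hh⁻¹ * Gg)) := by rw [hHZ1]
      _ = Gg⁻¹ * ((Z1 * Gg)) := by group
      _ = Gg⁻¹ * ((Gg * W1)) := by rw [hA1]
      _ = W1 := by group
  have sc : SemiconjBy W1 (Vp * W1) (W1 * Vp) := by
    unfold SemiconjBy
    group
  have main : (Hh⁻¹ * Gg)⁻¹ * (Z2 ^ b₁ * Z1 ^ (n' + 1)) * (Hh⁻¹ * Gg)
      = W1 * W2 ^ b₁ * W1 ^ n' := by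
    have hinv : (Hh⁻¹ * Gg)⁻¹ = Gg⁻¹ * Hh := by group
    calc (Hh⁻¹ * Gg)⁻¹ * (Z2 ^ b₁ * Z1 ^ (n' + 1)) * (Hh⁻¹ * Gg)
        = ((Gg⁻¹ * Hh) * Z2 ^ b₁ * (Hh⁻¹ * Gg)) *
          ((Gg⁻¹ * Hh) * Z1 ^ (n' + 1) * (Hh⁻¹ * Gg)) := by rw [hinv]; group
      _ = ((Gg⁻¹ * Hh) * Z2 * (Hh⁻¹ * Gg)) ^ b₁ *
          ((Gg⁻¹ * Hh) * Z1 * (Hh⁻¹ * Gg)) ^ (n' + 1) := by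
            rw [show Hh⁻¹ * Gg = (Gg⁻¹ * Hh)⁻¹ by group, conj_pow, conj_pow]
      _ = (W1 * Vp) ^ b₁ * W1 ^ (n' + 1) := by rw [hcZ2, hcZ1]
      _ = (W1 * Vp) ^ b₁ * W1 * W1 ^ n' := by rw [pow_succ']; group
      _ = (W1 * (Vp * W1) ^ b₁) * W1 ^ n' := by rw [(sc.pow_right b₁).eq]
      _ = W1 * W2 ^ b₁ * W1 ^ n' := by rw [hVsplit] <;> group
  rw [hd1, hk2, hbb1, hCP, ← hHh, ← hGg]
  constructor
  · rw [isConj_iff]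
    refine ⟨(Hh⁻¹ * Gg) * W1, ?_⟩
    have h6 : W1 * (W2 ^ b₁ * W1 ^ (b₂ - b₁)) * W1⁻¹ = W1 * W2 ^ b₁ * W1 ^ n' := by
      rw [hbb, pow_succ]
      group
    calc (Hh⁻¹ * Gg) * W1 * (W2 ^ b₁ * W1 ^ (b₂ - b₁)) * ((Hh⁻¹ * Gg) * W1)⁻¹
        = (Hh⁻¹ * Gg) * (W1 * (W2 ^ b₁ * W1 ^ (b₂ - b₁)) * W1⁻¹) * (Hh⁻¹ * Gg)⁻¹ := by
          group
      _ = (Hh⁻¹ * Gg) * (W1 * W2 ^ b₁ * W1 ^ n') * (Hh⁻¹ * Gg)⁻¹ := by rw [h6]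
      _ = (Hh⁻¹ * Gg) * ((Hh⁻¹ * Gg)⁻¹ * (Z2 ^ b₁ * Z1 ^ (n' + 1)) * (Hh⁻¹ * Gg)) *
          (Hh⁻¹ * Gg)⁻¹ := by rw [main]
      _ = Z2 ^ b₁ * Z1 ^ (n' + 1) := by group
  · exact main
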